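/- arXiv:2502.04195 — 10 statements merged into one kernel-verified Lean document; each statement's English description precedes it below -/
import Mathlib

section
/- Let C1 = C(G1,c1,A1,b1) and C2 = C(G2,c2,A2,b2) be constrained zonotopes in ℝ^n, where G1 ∈ ℝ^{n×s1}, G2 ∈ ℝ^{n×s2}, A1 ∈ ℝ^{q1×s1}, A2 ∈ ℝ^{q2×s2}. Then their Minkowski sum {z + w : z ∈ C1, w ∈ C2} equals the constrained zonotope C([G1 G2], c1 + c2, blockdiag(A1,A2), [b1; b2]), i.e. the constrained zonotope in ℝ^n with generator matrix the horizontal concatenation [G1 G2] ∈ ℝ^{n×(s1+s2)}, center c1 + c2, constraint matrix the block-diagonal matrix with blocks A1 and A2, and constraint vector obtained by stacking b1 over b2. -/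
/-- The constrained zonotope `C(G,c,A,b) = {x : ∃ ζ, x = Gζ + c, ‖ζ‖_∞ ≤ 1, Aζ = b}`. -/
def constrainedZonotope {ν σ κ : Type*} [Fintype σ]
    (G : Matrix ν σ ℝ) (c : ν → ℝ) (A : Matrix κ σ ℝ) (b : κ → ℝ) : Set (ν → ℝ) :=
  {x | ∃ ζ : σ → ℝ, (∀ i, |ζ i| ≤ 1) ∧ A.mulVec ζ = b ∧ x = G.mulVec ζ + c}

/-- The Minkowski sum of two constrained zonotopes `C(G₁,c₁,A₁,b₁)` and `C(G₂,c₂,A₂,b₂)`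
is the constrained zonotope with generator matrix `[G₁ G₂]`, center `c₁ + c₂`,
constraint matrix `blockdiag(A₁, A₂)` and constraint vector `[b₁; b₂]`. -/
theorem minkowski_sum_constrainedZonotope
    {n s₁ s₂ q₁ q₂ : ℕ}
    (G₁ : Matrix (Fin n) (Fin s₁) ℝ) (c₁ : Fin n → ℝ)
    (A₁ : Matrix (Fin q₁) (Fin s₁) ℝ) (b₁ : Fin q₁ → ℝ)
    (G₂ : Matrix (Fin n) (Fin s₂) ℝ) (c₂ : Fin n → ℝ)
    (A₂ : Matrix (Fin q₂) (Fin s₂) ℝ) (b₂ : Fin q₂ → ℝ) :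
    {x : Fin n → ℝ | ∃ z ∈ constrainedZonotope G₁ c₁ A₁ b₁,
        ∃ w ∈ constrainedZonotope G₂ c₂ A₂ b₂, x = z + w}
      = constrainedZonotope (Matrix.fromCols G₁ G₂) (c₁ + c₂)
          (Matrix.fromBlocks A₁ 0 0 A₂) (Sum.elim b₁ b₂) := by
  ext x
  constructor
  · rintro ⟨z, ⟨ζ₁, hζ₁, hA₁, rfl⟩, w, ⟨ζ₂, hζ₂, hA₂, rfl⟩, rfl⟩
    refine ⟨Sum.elim ζ₁ ζ₂, ?_, ?_, ?_⟩
    · rintro (i | i)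
      · simpa using hζ₁ i
      · simpa using hζ₂ i
    · rw [Matrix.fromBlocks_mulVec]
      ext (i | i) <;> simp [hA₁, hA₂, Matrix.mulVec_zero]
    · rw [Matrix.fromCols_mulVec_sumElim]
      abel
  · rintro ⟨ζ, hζ, hA, rfl⟩
    refine ⟨G₁.mulVec (ζ ∘ Sum.inl) + c₁, ⟨ζ ∘ Sum.inl, fun i => hζ _, ?_, rfl⟩,
      G₂.mulVec (ζ ∘ Sum.inr) + c₂, ⟨ζ ∘ Sum.inr, fun i => hζ _, ?_, rfl⟩, ?_⟩
    · have := congrFun hA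
      ext i
      have h := this (Sum.inl i)
      rw [Matrix.fromBlocks_mulVec] at h
      simpa [Matrix.mulVec_zero] using h
    · have := congrFun hA
      ext i
      have h := this (Sum.inr i)
      rw [Matrix.fromBlocks_mulVec] at h
      simpa [Matrix.mulVec_zero] using h
    · have : ζ = Sum.elim (ζ ∘ Sum.inl) (ζ ∘ Sum.inr) := by ext (i | i) <;> rfl
      rw [this, Matrix.fromCols_mulVec_sumElim]
      simp only [Sum.elim_comp_inl, Sum.elim_comp_inr]
      abel
end

section
/- Let C1 = C(G1,c1,A1,b1) and C2 = C(G2,c2,A2,b2) be constrained zonotopes in ℝ^n with G_i ∈ ℝ^{n×s_i}, A_i ∈ ℝ^{q_i×s_i}, b_i ∈ ℝ^{q_i}, i = 1,2. Suppose there exist matrices Γ ∈ ℝ^{s2×s1}, L ∈ ℝ^{s2}, P ∈ ℝ^{q2×q1} such that: c2 − c1 = G2 L, G1 = G2 Γ, P A1 = A2 Γ, P b1 = b2 + A2 L, and for every row index j, Σ_k |Γ_{jk}| + |L_j| ≤ 1. Then C1 ⊆ C2. -/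
/-- Sufficient conditions (via matrices `Γ`, `L`, `P`) for the inclusion of the
constrained zonotope `C(G₁,c₁,A₁,b₁)` in the constrained zonotope `C(G₂,c₂,A₂,b₂)`. -/
theorem constrainedZonotope_subset
    {n s₁ s₂ q₁ q₂ : ℕ}
    (G₁ : Matrix (Fin n) (Fin s₁) ℝ) (c₁ : Fin n → ℝ)
    (A₁ : Matrix (Fin q₁) (Fin s₁) ℝ) (b₁ : Fin q₁ → ℝ)
    (G₂ : Matrix (Fin n) (Fin s₂) ℝ) (c₂ : Fin n → ℝ)
    (A₂ : Matrix (Fin q₂) (Fin s₂) ℝ) (b₂ : Fin q₂ → ℝ)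
    (Γ : Matrix (Fin s₂) (Fin s₁) ℝ) (L : Fin s₂ → ℝ) (P : Matrix (Fin q₂) (Fin q₁) ℝ)
    (hc : c₂ - c₁ = G₂.mulVec L)
    (hG : G₁ = G₂ * Γ)
    (hA : P * A₁ = A₂ * Γ)
    (hb : P.mulVec b₁ = b₂ + A₂.mulVec L)
    (hrow : ∀ j, (∑ k, |Γ j k|) + |L j| ≤ 1) :
    constrainedZonotope G₁ c₁ A₁ b₁ ⊆ constrainedZonotope G₂ c₂ A₂ b₂ := by
  intro x ⟨ζ, hζ, hAζ, hx⟩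
  refine ⟨Γ.mulVec ζ - L, ?_, ?_, ?_⟩
  · intro j
    simp only [Pi.sub_apply]
    calc |Γ.mulVec ζ j - L j| ≤ |Γ.mulVec ζ j| + |L j| := abs_sub _ _
      _ ≤ (∑ k, |Γ j k|) + |L j| := by
          refine add_le_add ?_ le_rfl
          simp only [Matrix.mulVec, dotProduct]
          refine (Finset.abs_sum_le_sum_abs _ _).trans ?_
          refine Finset.sum_le_sum fun k _ => ?_
          rw [abs_mul]
          calc |Γ j k| * |ζ k| ≤ |Γ j k| * 1 :=
                mul_le_mul_of_nonneg_left (hζ k) (abs_nonneg _)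
            _ = |Γ j k| := mul_one _
      _ ≤ 1 := hrow j
  · have h1 : A₂.mulVec (Γ.mulVec ζ) = P.mulVec b₁ := by
      rw [Matrix.mulVec_mulVec, ← hA, ← Matrix.mulVec_mulVec, hAζ]
    rw [Matrix.mulVec_sub, h1, hb]
    abel
  · have h2 : G₂.mulVec (Γ.mulVec ζ) = G₁.mulVec ζ := by
      rw [Matrix.mulVec_mulVec, ← hG]
    rw [Matrix.mulVec_sub, h2, ← hc, hx]
    abel
end

section
/- Let K1 and K2 be constrained matrix zonotopes of the same dimension (n,p): K1 has generators G1_1,…,G1_{s1} ∈ ℝ^{n×p}, center C1 ∈ ℝ^{n×p}, constraint matrices A1_1,…,A1_{s1} ∈ ℝ^{m1×p} and constraint offset B1 ∈ ℝ^{m1×p}; K2 has generators G2_1,…,G2_{s2} ∈ ℝ^{n×p}, center C2 ∈ ℝ^{n×p}, constraint matrices A2_1,…,A2_{s2} ∈ ℝ^{m2×p} and constraint offset B2 ∈ ℝ^{m2×p}. Then the intersection K1 ∩ K2 equals the constrained matrix zonotope of dimension (n,p) with s1 + s2 generators given by Ĝ_i = G1_i for i ≤ s1 and Ĝ_i = 0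 for s1 < i ≤ s1+s2, center C1, constraint matrices Â_i ∈ ℝ^{(m1+m2+n)×p} given by vertically stacking (A1_i, 0, G1_i) for i ≤ s1 and (0, A2_{i−s1}, −G2_{i−s1}) for i > s1, and constraint offset obtained by vertically stacking (B1, B2, C2 − C1). -/
open Matrix

/-- The constrained matrix zonotope
`K((Gᵢ),C,(Aᵢ),B) = {X : ∃ ζ, X = Σ ζᵢ Gᵢ + C, ‖ζ‖_∞ ≤ 1, Σ ζᵢ Aᵢ = B}`. -/
def constrainedMatrixZonotope {ν π μ ρ σ : Type*} [Fintype σ]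
    (G : σ → Matrix ν π ℝ) (C : Matrix ν π ℝ)
    (A : σ → Matrix μ ρ ℝ) (B : Matrix μ ρ ℝ) : Set (Matrix ν π ℝ) :=
  {X | ∃ ζ : σ → ℝ, (∀ i, |ζ i| ≤ 1) ∧ (∑ i, ζ i • A i) = B ∧ X = (∑ i, ζ i • G i) + C}

/-- The intersection of two constrained matrix zonotopes of the same dimension `(n,p)`
is a constrained matrix zonotope with `s₁ + s₂` generators: the generators are those of
the first one padded with zeros, the center is `C₁`, the constraint matrices are the
vertical stackings `(A₁ᵢ, 0, G₁ᵢ)` resp. `(0, A₂ᵢ, −G₂ᵢ)`, and the constraint offset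
is the vertical stacking `(B₁, B₂, C₂ − C₁)`. -/
theorem constrainedMatrixZonotope_inter
    {n p s₁ s₂ m₁ m₂ : ℕ}
    (G₁ : Fin s₁ → Matrix (Fin n) (Fin p) ℝ) (C₁ : Matrix (Fin n) (Fin p) ℝ)
    (A₁ : Fin s₁ → Matrix (Fin m₁) (Fin p) ℝ) (B₁ : Matrix (Fin m₁) (Fin p) ℝ)
    (G₂ : Fin s₂ → Matrix (Fin n) (Fin p) ℝ) (C₂ : Matrix (Fin n) (Fin p) ℝ)
    (A₂ : Fin s₂ → Matrix (Fin m₂) (Fin p) ℝ) (B₂ : Matrix (Fin m₂) (Fin p) ℝ) :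
    constrainedMatrixZonotope G₁ C₁ A₁ B₁ ∩ constrainedMatrixZonotope G₂ C₂ A₂ B₂
      = constrainedMatrixZonotope
          (Sum.elim G₁ (fun _ => (0 : Matrix (Fin n) (Fin p) ℝ)))
          C₁
          (Sum.elim
            (fun i => Matrix.fromRows (A₁ i) (Matrix.fromRows (0 : Matrix (Fin m₂) (Fin p) ℝ) (G₁ i)))
            (fun i => Matrix.fromRows (0 : Matrix (Fin m₁) (Fin p) ℝ)
              (Matrix.fromRows (A₂ i) (-(G₂ i)))))
          (Matrix.fromRows B₁ (Matrix.fromRows B₂ (C₂ - C₁))) := by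
  ext X
  simp only [Set.mem_inter_iff, constrainedMatrixZonotope, Set.mem_setOf_eq]
  constructor
  · rintro ⟨⟨ζ₁, h1, hA1, hX1⟩, ⟨ζ₂, h2, hA2, hX2⟩⟩
    have hG : (∑ x, ζ₁ x • G₁ x) - (∑ x, ζ₂ x • G₂ x) = C₂ - C₁ := by
      have h : (∑ x, ζ₁ x • G₁ x) + C₁ = (∑ x, ζ₂ x • G₂ x) + C₂ := hX1.symm.trans hX2
      rw [sub_eq_sub_iff_add_eq_add, h]; exact add_comm _ _
    refine ⟨Sum.elim ζ₁ ζ₂, ?_, ?_, ?_⟩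
    · rintro (i | i) <;> simp [h1, h2]
    · rw [Fintype.sum_sum_type]
      ext i j
      rcases i with i | i
      · have := congrFun (congrFun hA1 i) j
        simp only [Matrix.sum_apply, Matrix.smul_apply, smul_eq_mul] at this
        simpa [Matrix.sum_apply, Matrix.fromRows_apply_inl] using this
      · rcases i with i | i
        · have := congrFun (congrFun hA2 i) j
          simp only [Matrix.sum_apply, Matrix.smul_apply, smul_eq_mul] at this
          simpa [Matrix.sum_apply, Matrix.fromRows_apply_inl, Matrix.fromRows_apply_inr] using this
        · have := congrFun (congrFun hG i) j
          simp only [Matrix.sum_apply, Matrix.smul_apply, Matrix.sub_apply, smul_eq_mul] at this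
          simp only [Matrix.add_apply, Matrix.sum_apply, Matrix.smul_apply,
            Sum.elim_inl, Sum.elim_inr,
            Matrix.fromRows_apply_inr, Matrix.fromRows_apply_inl, Matrix.neg_apply,
            Matrix.sub_apply, smul_eq_mul, mul_neg, Finset.sum_neg_distrib,
            ← sub_eq_add_neg]
          exact this

    · rw [Fintype.sum_sum_type]
      simpa using hX1
  · rintro ⟨ζ, h, hA, hX⟩
    rw [Fintype.sum_sum_type] at hA hX
    simp only [Sum.elim_inl, Sum.elim_inr, smul_zero, Finset.sum_const_zero, add_zero] at hX
    have eA1 : (∑ i, ζ (Sum.inl i) • A₁ i) = B₁ := by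
      ext i j
      have := congrFun (congrFun hA (Sum.inl i)) j
      simpa [Matrix.sum_apply, Matrix.add_apply, Matrix.fromRows_apply_inl] using this
    have eA2 : (∑ i, ζ (Sum.inr i) • A₂ i) = B₂ := by
      ext i j
      have := congrFun (congrFun hA (Sum.inr (Sum.inl i))) j
      simpa [Matrix.sum_apply, Matrix.add_apply, Matrix.fromRows_apply_inl,
        Matrix.fromRows_apply_inr] using this
    have eG : (∑ i, ζ (Sum.inl i) • G₁ i) - (∑ i, ζ (Sum.inr i) • G₂ i) = C₂ - C₁ := by
      ext i j
      have := congrFun (congrFun hA (Sum.inr (Sum.inr i))) j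
      simp only [Matrix.add_apply, Matrix.sum_apply, Matrix.smul_apply,
        Sum.elim_inl, Sum.elim_inr,
        Matrix.fromRows_apply_inr, Matrix.fromRows_apply_inl, Matrix.neg_apply,
        Matrix.sub_apply, smul_eq_mul, mul_neg, Finset.sum_neg_distrib,
        ← sub_eq_add_neg] at this
      simp only [Matrix.sub_apply, Matrix.sum_apply, Matrix.smul_apply, smul_eq_mul]
      exact this
    refine ⟨⟨fun i => ζ (Sum.inl i), fun i => h _, eA1, hX⟩,
      ⟨fun i => ζ (Sum.inr i), fun i => h _, eA2, ?_⟩⟩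
    rw [hX, sub_eq_sub_iff_add_eq_add.mp eG, add_comm]
end

section
/- Let K be a constrained matrix zonotope of dimension (n,p) with generators G_1,…,G_s ∈ ℝ^{n×p}, center C ∈ ℝ^{n×p}, constraint matrices A_1,…,A_s ∈ ℝ^{m×r} and constraint offset B ∈ ℝ^{m×r}, and let v ∈ ℝ^p be any vector. Then the image set {X v : X ∈ K} equals the constrained zonotope in ℝ^n with generator matrix [G_1 v ⋯ G_s v] ∈ ℝ^{n×s}, center C v, constraint matrix [vec(A_1) ⋯ vec(A_s)] ∈ ℝ^{mr×s} (the columnwise vectorizations of A_1,…,A_s) and constraint vector vec(B). -/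
/-- Right multiplication of a constrained matrix zonotope by a vector `v` yields the
constrained zonotope with generator matrix `[G₁v ⋯ G_s v]`, center `Cv`, constraint
matrix `[vec(A₁) ⋯ vec(A_s)]` (columnwise vectorizations, here indexed by pairs `(i,j)`
of row and column indices) and constraint vector `vec(B)`. -/
theorem constrainedMatrixZonotope_mulVec
    {n p m r s : ℕ}
    (G : Fin s → Matrix (Fin n) (Fin p) ℝ) (C : Matrix (Fin n) (Fin p) ℝ)
    (A : Fin s → Matrix (Fin m) (Fin r) ℝ) (B : Matrix (Fin m) (Fin r) ℝ)
    (v : Fin p → ℝ) :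
    {y : Fin n → ℝ | ∃ X ∈ constrainedMatrixZonotope G C A B, y = X.mulVec v}
      = constrainedZonotope
          (Matrix.of fun j (i : Fin s) => (G i).mulVec v j)
          (C.mulVec v)
          (Matrix.of fun (kl : Fin m × Fin r) (i : Fin s) => A i kl.1 kl.2)
          (fun kl : Fin m × Fin r => B kl.1 kl.2) := by
  ext y
  simp only [Set.mem_setOf_eq, constrainedMatrixZonotope, constrainedZonotope]
  constructor
  · rintro ⟨X, ⟨ζ, hζ, hA, rfl⟩, rfl⟩
    refine ⟨ζ, hζ, ?_, ?_⟩
    · funext kl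
      have := congrFun (congrFun hA kl.1) kl.2
      simpa [Matrix.mulVec, dotProduct, Matrix.sum_apply, mul_comm] using this
    · funext j
      simp only [Matrix.mulVec, dotProduct, Pi.add_apply, Matrix.sum_apply,
        Matrix.of_apply, Matrix.add_apply, Matrix.smul_apply, smul_eq_mul, mul_add, add_mul,
        Finset.mul_sum, Finset.sum_mul, Finset.sum_add_distrib]
      rw [Finset.sum_comm]
      congr 1
      · exact Finset.sum_congr rfl fun i _ => Finset.sum_congr rfl fun x _ => by ring
  · rintro ⟨ζ, hζ, hA, rfl⟩
    refine ⟨(∑ i, ζ i • G i) + C, ⟨ζ, hζ, ?_, rfl⟩, ?_⟩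
    · ext k l
      have := congrFun hA (k, l)
      simpa [Matrix.mulVec, dotProduct, Matrix.sum_apply, mul_comm] using this
    · funext j
      simp only [Matrix.mulVec, dotProduct, Pi.add_apply, Matrix.sum_apply,
        Matrix.of_apply, Matrix.add_apply, Matrix.smul_apply, smul_eq_mul, mul_add, add_mul,
        Finset.mul_sum, Finset.sum_mul, Finset.sum_add_distrib]
      rw [Finset.sum_comm]
      congr 1
      · exact Finset.sum_congr rfl fun i _ => Finset.sum_congr rfl fun x _ => by ring
end

section
/- Let M_prior ⊆ ℝ^{n×(n+m)} and M_w ⊆ ℝ^{n×T} be arbitrary sets (in the paper, constrained matrix zonotopes encoding prior model knowledge and the T-fold disturbance set, respectively). Let X_0 ∈ ℝ^{n×T}, X_1 ∈ ℝ^{n×T}, U_0 ∈ ℝ^{m×T} be data matrices and D_0 = [X_0; U_0] ∈ ℝ^{(n+m)×T} their vertical stacking. Suppose G_K ∈ ℝ^{T×n} satisfies X_0 G_K = I_n, and set K = U_0 G_K ∈ ℝ^{m×n}. Define the consistency set Σ = {θ = [A B] ∈ M_prior : ∃ W ∈ M_w, X_1 = θ D_0 + W}. Then the set of consistent closed-loop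 matrices {A + B K : [A B] ∈ Σ} equals {(X_1 − W) G_K : W ∈ M_w and ∃ θ ∈ M_prior with W = X_1 − θ D_0}. -/
/-- Let `M_prior` and `M_w` be arbitrary sets of parameter matrices `θ = [A B]` and of
disturbance matrices, let `D₀ = [X₀; U₀]`, let `G_K` satisfy `X₀ G_K = I`, and let
`K = U₀ G_K`.  For the consistency set
`Σ = {θ = [A B] ∈ M_prior : ∃ W ∈ M_w, X₁ = θD₀ + W}`, the set of consistent closed-loop
matrices `{A + BK : [A B] ∈ Σ}` equals
`{(X₁ − W)G_K : W ∈ M_w, ∃ θ ∈ M_prior, W = X₁ − θD₀}`.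
Here `θ = [A B]` is encoded with column index type `Fin n ⊕ Fin m`, so that `A` is the
submatrix of the first `n` columns and `B` the submatrix of the last `m` columns. -/
theorem closedLoop_set_representation
    {n m T : ℕ}
    (Mprior : Set (Matrix (Fin n) (Fin n ⊕ Fin m) ℝ))
    (Mw : Set (Matrix (Fin n) (Fin T) ℝ))
    (X₀ X₁ : Matrix (Fin n) (Fin T) ℝ) (U₀ : Matrix (Fin m) (Fin T) ℝ)
    (G_K : Matrix (Fin T) (Fin n) ℝ) (K : Matrix (Fin m) (Fin n) ℝ)
    (D₀ : Matrix (Fin n ⊕ Fin m) (Fin T) ℝ)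
    (hD₀ : D₀ = Matrix.fromRows X₀ U₀)
    (hinv : X₀ * G_K = 1)
    (hK : K = U₀ * G_K) :
    {Ak : Matrix (Fin n) (Fin n) ℝ |
        ∃ θ ∈ {θ ∈ Mprior | ∃ W ∈ Mw, X₁ = θ * D₀ + W},
          Ak = θ.submatrix id Sum.inl + θ.submatrix id Sum.inr * K}
      = {Ak : Matrix (Fin n) (Fin n) ℝ |
          ∃ W ∈ Mw, (∃ θ ∈ Mprior, W = X₁ - θ * D₀) ∧ Ak = (X₁ - W) * G_K} := by
  have key : ∀ θ : Matrix (Fin n) (Fin n ⊕ Fin m) ℝ,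
      θ * D₀ * G_K = θ.submatrix id Sum.inl + θ.submatrix id Sum.inr * K := by
    intro θ
    have hθ : θ = Matrix.fromCols (θ.submatrix id Sum.inl) (θ.submatrix id Sum.inr) := by
      ext i j
      cases j <;> simp [Matrix.fromCols]
    rw [hD₀]
    conv_lhs => rw [hθ]
    rw [Matrix.fromCols_mul_fromRows, Matrix.add_mul, Matrix.mul_assoc,
      Matrix.mul_assoc, hinv, Matrix.mul_one, hK]
  ext Ak
  simp only [Set.mem_setOf_eq, Set.mem_sep_iff]
  constructor
  · rintro ⟨θ, ⟨hθ, W, hW, hX⟩, rfl⟩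
    refine ⟨W, hW, ⟨θ, hθ, by rw [hX]; abel⟩, ?_⟩
    have : X₁ - W = θ * D₀ := by rw [hX]; abel
    rw [this, key]
  · rintro ⟨W, hW, ⟨θ, hθ, hWeq⟩, rfl⟩
    refine ⟨θ, ⟨hθ, W, hW, by rw [hWeq]; abel⟩, ?_⟩
    have : X₁ - W = θ * D₀ := by rw [hWeq]; abel
    rw [this, key]
end

section
/- Let M_prior be a constrained matrix zonotope in ℝ^{n×(n+m)} with generators G_{θ,1},…,G_{θ,sθ}, center C_θ, constraint matrices A_{θ,i} ∈ ℝ^{nθ×T} and constraint offset B_θ ∈ ℝ^{nθ×T}, and let M_w be a constrained matrix zonotope in ℝ^{n×T} with generators G_{w,1},…,G_{w,sw}, center C_w, constraint matrices A_{w,i} ∈ ℝ^{nw×T} and constraint offset B_w ∈ ℝ^{nw×T}. Let D_0 ∈ ℝ^{(n+m)×T} and X_1 ∈ ℝ^{n×T}. Then the set of disturbance matrices consistent with both data and prior knowledge, {W ∈ M_w : ∃ θ ∈ M_prior, W = X_1 − θ D_0}, equals the constrained matrix zonotope in ℝ^{n×T} with s_w + s_θ generators given by Ĝ_i = G_{w,i}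 for i ≤ s_w and Ĝ_i = 0 for s_w < i ≤ s_w + s_θ, center C_w, constraint matrices obtained, in terms of the combined coefficient vector ζ = (β, γ) with β ∈ ℝ^{sw}, γ ∈ ℝ^{sθ}, by the three constraint blocks Σ_i β_i A_{w,i} = B_w, Σ_i γ_i A_{θ,i} = B_θ, and Σ_i β_i G_{w,i} + Σ_i γ_i G_{θ,i} D_0 = X_1 − C_θ D_0 − C_w. -/
lemma smul_fromRows_sum {σ m₁ m₂ n : Type*} [Fintype σ] [Fintype m₁] [Fintype m₂]
    (f : σ → ℝ) (P : σ → Matrix m₁ n ℝ) (Q : σ → Matrix m₂ n ℝ) :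
    (∑ i, f i • Matrix.fromRows (P i) (Q i))
      = Matrix.fromRows (∑ i, f i • P i) (∑ i, f i • Q i) := by
  ext x j
  cases x <;> simp [Matrix.sum_apply]

lemma fromRows_add' {m₁ m₂ n : Type*}
    (A C : Matrix m₁ n ℝ) (B D : Matrix m₂ n ℝ) :
    Matrix.fromRows A B + Matrix.fromRows C D = Matrix.fromRows (A + C) (B + D) := by
  ext x j
  cases x <;> simp

/-- The set of disturbance matrices consistent with both data and prior knowledge,
`{W ∈ M_w : ∃ θ ∈ M_prior, W = X₁ − θD₀}`, is the constrained matrix zonotope with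
`s_w + s_θ` generators `(G_{w,i}, 0)`, center `C_w`, and three constraint blocks: in
terms of the combined coefficient vector `ζ = (β, γ)`, the blocks read
`Σᵢ βᵢ A_{w,i} = B_w`, `Σᵢ γᵢ A_{θ,i} = B_θ` and
`Σᵢ βᵢ G_{w,i} + Σᵢ γᵢ G_{θ,i}D₀ = X₁ − C_θD₀ − C_w`. -/
theorem disturbance_set_data_and_prior
    {n nm T sθ sw nθ nw : ℕ}
    (Gθ : Fin sθ → Matrix (Fin n) (Fin nm) ℝ) (Cθ : Matrix (Fin n) (Fin nm) ℝ)
    (Aθ : Fin sθ → Matrix (Fin nθ) (Fin T) ℝ) (Bθ : Matrix (Fin nθ) (Fin T) ℝ)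
    (Gw : Fin sw → Matrix (Fin n) (Fin T) ℝ) (Cw : Matrix (Fin n) (Fin T) ℝ)
    (Aw : Fin sw → Matrix (Fin nw) (Fin T) ℝ) (Bw : Matrix (Fin nw) (Fin T) ℝ)
    (D₀ : Matrix (Fin nm) (Fin T) ℝ) (X₁ : Matrix (Fin n) (Fin T) ℝ) :
    {W ∈ constrainedMatrixZonotope Gw Cw Aw Bw |
        ∃ θ ∈ constrainedMatrixZonotope Gθ Cθ Aθ Bθ, W = X₁ - θ * D₀}
      = constrainedMatrixZonotope
          (Sum.elim Gw (fun _ : Fin sθ => (0 : Matrix (Fin n) (Fin T) ℝ)))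
          Cw
          (Sum.elim
            (fun i : Fin sw => Matrix.fromRows (Aw i)
              (Matrix.fromRows (0 : Matrix (Fin nθ) (Fin T) ℝ) (Gw i)))
            (fun i : Fin sθ => Matrix.fromRows (0 : Matrix (Fin nw) (Fin T) ℝ)
              (Matrix.fromRows (Aθ i) (Gθ i * D₀))))
          (Matrix.fromRows Bw (Matrix.fromRows Bθ (X₁ - Cθ * D₀ - Cw))) := by
  have key : ∀ γ : Fin sθ → ℝ,
      (∑ i, γ i • Gθ i) * D₀ = ∑ i, γ i • (Gθ i * D₀) := by
    intro γ
    rw [Matrix.sum_mul]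
    simp [Matrix.smul_mul]
  ext W
  constructor
  · rintro ⟨⟨β, hβ1, hβ2, rfl⟩, θ, ⟨γ, hγ1, hγ2, rfl⟩, hW⟩
    rw [Matrix.add_mul, key] at hW
    refine ⟨Sum.elim β γ, fun i => by cases i <;> simp [hβ1, hγ1], ?_, ?_⟩
    · rw [Fintype.sum_sum_type]
      simp only [Sum.elim_inl, Sum.elim_inr, smul_fromRows_sum, fromRows_add']
      rw [Matrix.fromRows_inj.eq_iff, Matrix.fromRows_inj.eq_iff]
      refine ⟨by simp [hβ2], by simp [hγ2], ?_⟩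
      rw [eq_sub_iff_add_eq] at hW
      rw [eq_sub_iff_add_eq, eq_sub_iff_add_eq, ← hW]
      abel
    · rw [Fintype.sum_sum_type]
      simp
  · rintro ⟨ζ, hζ1, hζ2, rfl⟩
    rw [Fintype.sum_sum_type] at hζ2
    simp only [Sum.elim_inl, Sum.elim_inr] at hζ2
    rw [smul_fromRows_sum, smul_fromRows_sum, smul_fromRows_sum, smul_fromRows_sum,
      fromRows_add', fromRows_add', Matrix.fromRows_inj.eq_iff, Matrix.fromRows_inj.eq_iff] at hζ2
    obtain ⟨h1, h2, h3⟩ := hζ2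
    simp only [smul_zero, Finset.sum_const_zero, add_zero, zero_add] at h1 h2 h3
    refine ⟨⟨fun i => ζ (Sum.inl i), fun i => hζ1 _, h1, ?_⟩,
      (∑ i, ζ (Sum.inr i) • Gθ i) + Cθ,
      ⟨fun i => ζ (Sum.inr i), fun i => hζ1 _, h2, rfl⟩, ?_⟩
    · rw [Fintype.sum_sum_type]
      simp
    · rw [Fintype.sum_sum_type]
      simp only [Sum.elim_inl, Sum.elim_inr, smul_zero, Finset.sum_const_zero, add_zero]
      rw [Matrix.add_mul, key]
      rw [eq_sub_iff_add_eq, eq_sub_iff_add_eq] at h3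
      rw [eq_sub_iff_add_eq, ← h3]
      abel
end

section
/- Let K be a constrained matrix zonotope of dimension (n,n) with generators G_1,…,G_s ∈ ℝ^{n×n}, center C ∈ ℝ^{n×n}, constraint matrices A_1,…,A_s ∈ ℝ^{m×r} and constraint offset B ∈ ℝ^{m×r}, and let Z_w = C(G_h, c_h, A_h, b_h) be a constrained zonotope in ℝ^n with G_h ∈ ℝ^{n×sw}, A_h ∈ ℝ^{nw×sw}, b_h ∈ ℝ^{nw}. Fix x ∈ ℝ^n. Then the set of all possible next states {M x + w : M ∈ K, w ∈ Z_w} equals the constrained zonotope in ℝ^n with generator matrix [G_1 x ⋯ G_s x G_h] ∈ ℝ^{n×(s+sw)}, center C x + c_h, constraint matrix the block-diagonal matrix with blocks [vec(A_1) ⋯ vec(A_s)] ∈ ℝ^{mr×s} and A_h ∈ ℝ^{nw×sw}, and constraint vector obtained by stacking vec(B) over b_h. -/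
/-- For a constrained matrix zonotope `K` of closed-loop matrices, a constrained
zonotope `Z_w = C(G_h,c_h,A_h,b_h)` of disturbances, and a fixed state `x`, the set of
all possible next states `{Mx + w : M ∈ K, w ∈ Z_w}` is the constrained zonotope with
generator matrix `[G₁x ⋯ G_s x  G_h]`, center `Cx + c_h`, block-diagonal constraint
matrix `blockdiag([vec(A₁) ⋯ vec(A_s)], A_h)` and constraint vector `[vec(B); b_h]`. -/
theorem next_state_constrainedZonotope
    {n m r s sw nw : ℕ}
    (G : Fin s → Matrix (Fin n) (Fin n) ℝ) (C : Matrix (Fin n) (Fin n) ℝ)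
    (A : Fin s → Matrix (Fin m) (Fin r) ℝ) (B : Matrix (Fin m) (Fin r) ℝ)
    (Gh : Matrix (Fin n) (Fin sw) ℝ) (ch : Fin n → ℝ)
    (Ah : Matrix (Fin nw) (Fin sw) ℝ) (bh : Fin nw → ℝ)
    (x : Fin n → ℝ) :
    {y : Fin n → ℝ | ∃ M ∈ constrainedMatrixZonotope G C A B,
        ∃ w ∈ constrainedZonotope Gh ch Ah bh, y = M.mulVec x + w}
      = constrainedZonotope
          (Matrix.fromCols (Matrix.of fun j (i : Fin s) => (G i).mulVec x j) Gh)
          (C.mulVec x + ch)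
          (Matrix.fromBlocks
            (Matrix.of fun (kl : Fin m × Fin r) (i : Fin s) => A i kl.1 kl.2) 0 0 Ah)
          (Sum.elim (fun kl : Fin m × Fin r => B kl.1 kl.2) bh) := by
  have keyA : ∀ ζ1 : Fin s → ℝ,
      (Matrix.of fun (kl : Fin m × Fin r) (i : Fin s) => A i kl.1 kl.2).mulVec ζ1
        = fun kl : Fin m × Fin r => (∑ i, ζ1 i • A i) kl.1 kl.2 := by
    intro ζ1; funext kl
    simp [Matrix.mulVec, dotProduct, Matrix.sum_apply, mul_comm]
  have keyG : ∀ ζ1 : Fin s → ℝ,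
      (Matrix.of fun j (i : Fin s) => (G i).mulVec x j).mulVec ζ1
        = (∑ i, ζ1 i • G i).mulVec x := by
    intro ζ1; funext j
    simp only [Matrix.mulVec, dotProduct, Matrix.of_apply, Matrix.sum_apply,
      Matrix.smul_apply, smul_eq_mul, Finset.sum_mul]
    rw [Finset.sum_comm]
    exact Finset.sum_congr rfl fun k _ => Finset.sum_congr rfl fun i _ => by ring
  ext y
  simp only [Set.mem_setOf_eq, constrainedMatrixZonotope, constrainedZonotope]
  constructor
  · rintro ⟨M, ⟨ζ1, h1, hA, rfl⟩, w, ⟨ζ2, h2, hAh, rfl⟩, rfl⟩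
    refine ⟨Sum.elim ζ1 ζ2, ?_, ?_, ?_⟩
    · rintro (i | i); exacts [h1 i, h2 i]
    · rw [Matrix.fromBlocks_mulVec]
      simp only [Matrix.zero_mulVec, add_zero, zero_add, Sum.elim_comp_inl, Sum.elim_comp_inr]
      rw [keyA, hA, hAh]
    · rw [Matrix.fromCols_mulVec_sumElim, keyG, Matrix.add_mulVec]
      abel
  · rintro ⟨ζ, hb, hcon, rfl⟩
    have hζ : ζ = Sum.elim (ζ ∘ Sum.inl) (ζ ∘ Sum.inr) := (Sum.elim_comp_inl_inr ζ).symm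
    rw [hζ] at hcon ⊢
    rw [Matrix.fromBlocks_mulVec] at hcon
    simp only [Matrix.zero_mulVec, add_zero, zero_add] at hcon
    have h1 : ∀ kl : Fin m × Fin r,
        (Matrix.of fun (kl : Fin m × Fin r) (i : Fin s) => A i kl.1 kl.2).mulVec
          (ζ ∘ Sum.inl) kl = B kl.1 kl.2 := fun kl => congrFun hcon (Sum.inl kl)
    have h2 : Ah.mulVec (ζ ∘ Sum.inr) = bh := funext fun k => congrFun hcon (Sum.inr k)
    refine ⟨(∑ i, (ζ ∘ Sum.inl) i • G i) + C, ⟨ζ ∘ Sum.inl, fun i => hb _, ?_, rfl⟩,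
      Gh.mulVec (ζ ∘ Sum.inr) + ch, ⟨ζ ∘ Sum.inr, fun i => hb _, h2, rfl⟩, ?_⟩
    · ext k l
      have := h1 (k, l)
      rw [keyA] at this
      exact this
    · rw [Matrix.fromCols_mulVec_sumElim, keyG, Matrix.add_mulVec]
      abel
end

section
/- Let K be a constrained matrix zonotope of dimension (n,n) with generators G_1,…,G_s ∈ ℝ^{n×n}, center C ∈ ℝ^{n×n}, constraint matrices A_1,…,A_s ∈ ℝ^{m×r} and constraint offset B ∈ ℝ^{m×r}; let Z_w = C(G_h, c_h, A_h, b_h) be a constrained zonotope in ℝ^n; and let the safe set be the constrained zonotope C_x = C(G_x, c_x, A_x, b_x) with G_x ∈ ℝ^{n×sx}, A_x ∈ ℝ^{q×sx}. Fix λ > 0. For each x ∈ C_x, let C_next(x) denote the constrained zonotope in ℝ^n with generator matrix G_cl(x) = [G_1 x ⋯ G_s x G_h], center c_cl(x) = C x + c_h, constraint matrix A_cl = blockdiag([vec(A_1) ⋯ vec(A_s)], A_h) and constraint vector b_cl = [vec(B); b_h]. Suppose that for every x ∈ C_x there exist matrices Γ ∈ ℝ^{sx×(s+sw)}, L ∈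 ℝ^{sx}, P ∈ ℝ^{q×(mr+nw)} such that c_x − c_cl(x) = λ G_x L, G_cl(x) = λ G_x Γ, P A_cl = A_x Γ, P b_cl = λ b_x + A_x L, and for every row index j, Σ_k |Γ_{jk}| + |L_j| ≤ 1. Then for every x ∈ C_x, every M ∈ K and every w ∈ Z_w, the next state M x + w belongs to the λ-scaled safe set C(λ G_x, c_x, A_x, λ b_x), i.e. there exists ζ with ‖ζ‖_∞ ≤ 1, A_x ζ = λ b_x and M x + w = λ G_x ζ + c_x. -/
/-- Safe control via set inclusion: if, for every `x` in the constrained-zonotope safe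
set `C_x = C(G_x,c_x,A_x,b_x)`, the next-state constrained zonotope
`C_next(x) = C([G₁x ⋯ G_s x  G_h], Cx + c_h, blockdiag([vec A₁ ⋯ vec A_s], A_h), [vec B; b_h])`
satisfies the inclusion conditions of the `(Γ, L, P)` lemma with respect to the
`λ`-scaled safe set `C(λG_x, c_x, A_x, λb_x)`, then for every `x ∈ C_x`, every
closed-loop matrix `M` in the constrained matrix zonotope `K` and every disturbance
`w ∈ Z_w`, the next state `Mx + w` belongs to the `λ`-scaled safe set. -/
theorem safe_control_constrainedZonotope
    {n m r s sw nw sx q : ℕ}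
    (G : Fin s → Matrix (Fin n) (Fin n) ℝ) (C : Matrix (Fin n) (Fin n) ℝ)
    (A : Fin s → Matrix (Fin m) (Fin r) ℝ) (B : Matrix (Fin m) (Fin r) ℝ)
    (Gh : Matrix (Fin n) (Fin sw) ℝ) (ch : Fin n → ℝ)
    (Ah : Matrix (Fin nw) (Fin sw) ℝ) (bh : Fin nw → ℝ)
    (Gx : Matrix (Fin n) (Fin sx) ℝ) (cx : Fin n → ℝ)
    (Ax : Matrix (Fin q) (Fin sx) ℝ) (bx : Fin q → ℝ)
    (lam : ℝ) (hlam : 0 < lam)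
    (hinc : ∀ x ∈ constrainedZonotope Gx cx Ax bx,
      ∃ (Γ : Matrix (Fin sx) (Fin s ⊕ Fin sw) ℝ) (L : Fin sx → ℝ)
        (P : Matrix (Fin q) ((Fin m × Fin r) ⊕ Fin nw) ℝ),
        cx - (C.mulVec x + ch) = lam • Gx.mulVec L ∧
        Matrix.fromCols (Matrix.of fun j (i : Fin s) => (G i).mulVec x j) Gh
          = lam • (Gx * Γ) ∧
        P * Matrix.fromBlocks
            (Matrix.of fun (kl : Fin m × Fin r) (i : Fin s) => A i kl.1 kl.2) 0 0 Ah
          = Ax * Γ ∧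
        P.mulVec (Sum.elim (fun kl : Fin m × Fin r => B kl.1 kl.2) bh)
          = lam • bx + Ax.mulVec L ∧
        ∀ j, (∑ k, |Γ j k|) + |L j| ≤ 1) :
    ∀ x ∈ constrainedZonotope Gx cx Ax bx,
      ∀ M ∈ constrainedMatrixZonotope G C A B,
        ∀ w ∈ constrainedZonotope Gh ch Ah bh,
          ∃ ζ : Fin sx → ℝ, (∀ i, |ζ i| ≤ 1) ∧ Ax.mulVec ζ = lam • bx ∧
            M.mulVec x + w = (lam • Gx).mulVec ζ + cx := by
  intro x hx M hM w hw
  obtain ⟨Γ, L, P, hc, hG, hA, hb, hbound⟩ := hinc x hx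
  obtain ⟨ζM, hζM, hAM, hMdef⟩ := hM
  obtain ⟨ζw, hζw, hAw, hwdef⟩ := hw
  set ξ : Fin s ⊕ Fin sw → ℝ := Sum.elim ζM ζw with hξ
  refine ⟨Γ.mulVec ξ - L, ?_, ?_, ?_⟩
  · intro j
    have h1 : |Γ.mulVec ξ j| ≤ ∑ k, |Γ j k| := by
      calc |Γ.mulVec ξ j| = |∑ k, Γ j k * ξ k| := by
            simp [Matrix.mulVec, dotProduct]
        _ ≤ ∑ k, |Γ j k * ξ k| := Finset.abs_sum_le_sum_abs _ _
        _ ≤ ∑ k, |Γ j k| := by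
            refine Finset.sum_le_sum fun k _ => ?_
            rw [abs_mul]
            have : |ξ k| ≤ 1 := by
              rcases k with k | k
              · simpa [hξ] using hζM k
              · simpa [hξ] using hζw k
            nlinarith [abs_nonneg (Γ j k)]
    calc |(Γ.mulVec ξ - L) j| ≤ |Γ.mulVec ξ j| + |L j| := by
          simpa using abs_sub (Γ.mulVec ξ j) (L j)
      _ ≤ (∑ k, |Γ j k|) + |L j| := by linarith
      _ ≤ 1 := hbound j
  · have hAcl : (Matrix.fromBlocks
        (Matrix.of fun (kl : Fin m × Fin r) (i : Fin s) => A i kl.1 kl.2) 0 0 Ah).mulVec ξ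
        = Sum.elim (fun kl : Fin m × Fin r => B kl.1 kl.2) bh := by
      funext kl
      rcases kl with ⟨k, l⟩ | k
      · have := congrFun (congrFun hAM k) l
        simp only [Matrix.sum_apply, Matrix.smul_apply, smul_eq_mul] at this
        simp [hξ, Matrix.fromBlocks, Matrix.mulVec, dotProduct, ← this, mul_comm]
      · have := congrFun hAw k
        simpa [hξ, Matrix.fromBlocks, Matrix.mulVec, dotProduct] using this
    have key : Ax.mulVec (Γ.mulVec ξ) = lam • bx + Ax.mulVec L := by
      rw [Matrix.mulVec_mulVec, ← hA, ← Matrix.mulVec_mulVec, hAcl, hb]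
    rw [Matrix.mulVec_sub, key]
    abel
  · have hGcl : (Matrix.fromCols
        (Matrix.of fun j (i : Fin s) => (G i).mulVec x j) Gh).mulVec ξ
        = (∑ i, ζM i • G i).mulVec x + Gh.mulVec ζw := by
      funext j
      simp only [hξ, Matrix.fromCols_mulVec_sumElim, Pi.add_apply]
      congr 1
      simp [Matrix.mulVec, dotProduct, Matrix.sum_apply, Finset.sum_mul,
        Finset.mul_sum, mul_comm, mul_assoc, mul_left_comm]
      rw [Finset.sum_comm]
    have h2 : (lam • (Gx * Γ)).mulVec ξ = (∑ i, ζM i • G i).mulVec x + Gh.mulVec ζw := by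
      rw [← hG, hGcl]
    have h3 : (lam • Gx).mulVec (Γ.mulVec ξ - L)
        = (lam • (Gx * Γ)).mulVec ξ - lam • Gx.mulVec L := by
      rw [Matrix.mulVec_sub, Matrix.smul_mulVec, Matrix.smul_mulVec,
        Matrix.smul_mulVec, Matrix.mulVec_mulVec]
    rw [h3, h2, ← hc, hMdef, hwdef, Matrix.add_mulVec]
    abel
end

section
/- Let M ∈ ℝ^{n×n} be a closed-loop matrix, let the disturbance set be a constrained zonotope Z_w = C(G_h, c_h, A_h, b_h) ⊂ ℝ^n with G_h ∈ ℝ^{n×sw}, and let the safe set be the polytope P = {x ∈ ℝ^n : H_s x ≤ h_s} with H_s ∈ ℝ^{q×n}, h_s ∈ ℝ^q. Fix λ ∈ (0,1). Define y ∈ ℝ^q by y_j = Σ_{i=1}^{sw} |H_{s,j} G_{h,i}|, where H_{s,j} is the j-th row of H_s and G_{h,i} the i-th column of G_h. Suppose there exists an entrywise nonnegative matrix P̄ ∈ ℝ^{q×q} such that P̄ H_s = H_s M and P̄ h_s ≤ λ h_s − H_s c_h − y (entrywise). Then for every x with H_s x ≤ h_s and every w ∈ Z_w, the next state satisfies H_s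 (M x + w) ≤ λ h_s; that is, the polytope P is mapped into its λ-scaled version λP under the closed-loop dynamics for all admissible disturbances. -/
/-- Polytopic safe set: if there is an entrywise nonnegative matrix `P̄` with
`P̄ H_s = H_s M` and `P̄ h_s ≤ λh_s − H_s c_h − y` (entrywise), where
`y_j = Σᵢ |H_{s,j} G_{h,i}|`, then for every `x` in the polytope `{x : H_s x ≤ h_s}`
and every disturbance `w` in the constrained zonotope `Z_w = C(G_h,c_h,A_h,b_h)`,
the next state satisfies `H_s (Mx + w) ≤ λh_s`, i.e. the polytope is mapped into its
`λ`-scaled version under the closed-loop dynamics. -/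
theorem safe_control_polytope
    {n q sw nw : ℕ}
    (M : Matrix (Fin n) (Fin n) ℝ)
    (Gh : Matrix (Fin n) (Fin sw) ℝ) (ch : Fin n → ℝ)
    (Ah : Matrix (Fin nw) (Fin sw) ℝ) (bh : Fin nw → ℝ)
    (Hs : Matrix (Fin q) (Fin n) ℝ) (hs : Fin q → ℝ)
    (lam : ℝ) (hlam : lam ∈ Set.Ioo (0 : ℝ) 1)
    (y : Fin q → ℝ) (hy : ∀ j, y j = ∑ i, |(Hs * Gh) j i|)
    (Pbar : Matrix (Fin q) (Fin q) ℝ)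
    (hPnonneg : ∀ i j, 0 ≤ Pbar i j)
    (hPH : Pbar * Hs = Hs * M)
    (hPh : ∀ j, Pbar.mulVec hs j ≤ lam * hs j - Hs.mulVec ch j - y j) :
    ∀ x : Fin n → ℝ, (∀ j, Hs.mulVec x j ≤ hs j) →
      ∀ w ∈ constrainedZonotope Gh ch Ah bh,
        ∀ j, Hs.mulVec (M.mulVec x + w) j ≤ lam * hs j := by
  intro x hx w hw j
  obtain ⟨ζ, hζ, -, rfl⟩ := hw
  have key : Hs.mulVec (M.mulVec x) = Pbar.mulVec (Hs.mulVec x) := by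
    rw [Matrix.mulVec_mulVec, Matrix.mulVec_mulVec, hPH]
  have h1 : Hs.mulVec (M.mulVec x + (Gh.mulVec ζ + ch)) j
      = Pbar.mulVec (Hs.mulVec x) j + (Hs * Gh).mulVec ζ j + Hs.mulVec ch j := by
    simp only [Matrix.mulVec_add, Pi.add_apply, key, Matrix.mulVec_mulVec]
    ring
  rw [h1]
  have h2 : Pbar.mulVec (Hs.mulVec x) j ≤ Pbar.mulVec hs j := by
    simp only [Matrix.mulVec, dotProduct]
    apply Finset.sum_le_sum
    intro i _
    exact mul_le_mul_of_nonneg_left (hx i) (hPnonneg j i)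
  have h3 : (Hs * Gh).mulVec ζ j ≤ y j := by
    rw [hy]
    simp only [Matrix.mulVec, dotProduct]
    refine Finset.sum_le_sum fun i _ => ?_
    calc (Hs * Gh) j i * ζ i ≤ |(Hs * Gh) j i * ζ i| := le_abs_self _
      _ = |(Hs * Gh) j i| * |ζ i| := abs_mul _ _
      _ ≤ |(Hs * Gh) j i| := mul_le_of_le_one_right (abs_nonneg _) (hζ i)
  have := hPh j
  linarith
end

section
/- Let C1 = C(G1,c1,A1,b1) and C2 = C(G2,c2,A2,b2) be constrained zonotopes in ℝ^n with G_i ∈ ℝ^{n×s_i}, A_i ∈ ℝ^{q_i×s_i}, b_i ∈ ℝ^{q_i}, i = 1,2, and suppose there exist Γ ∈ ℝ^{s2×s1}, L ∈ ℝ^{s2} with c2 − c1 = G2 L, G1 = G2 Γ, and, for some P ∈ ℝ^{q2×q1}, P A1 = A2 Γ and P b1 = b2 + A2 L, together with the row condition Σ_k |Γ_{jk}| + |L_j| ≤ 1 for all j. Then for every ζ1 ∈ ℝ^{s1} with ‖ζ1‖_∞ ≤ 1 and A1 ζ1 = b1, the vector ζ2 = Γ ζ1 − L satisfies ‖ζ2‖_∞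 ≤ 1, A2 ζ2 = b2, and G1 ζ1 + c1 = G2 ζ2 + c2. In particular, every element of C1 admits an explicit representation as an element of C2. -/
/-- Explicit version of the constrained-zonotope inclusion lemma: under the `(Γ, L, P)`
conditions relating `C(G₁,c₁,A₁,b₁)` and `C(G₂,c₂,A₂,b₂)`, every coefficient vector
`ζ₁` representing an element of the first constrained zonotope yields the coefficient
vector `ζ₂ = Γζ₁ − L` which represents the same point in the second constrained
zonotope: `‖ζ₂‖_∞ ≤ 1`, `A₂ζ₂ = b₂`, and `G₁ζ₁ + c₁ = G₂ζ₂ + c₂`. -/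
theorem constrainedZonotope_inclusion_explicit
    {n s₁ s₂ q₁ q₂ : ℕ}
    (G₁ : Matrix (Fin n) (Fin s₁) ℝ) (c₁ : Fin n → ℝ)
    (A₁ : Matrix (Fin q₁) (Fin s₁) ℝ) (b₁ : Fin q₁ → ℝ)
    (G₂ : Matrix (Fin n) (Fin s₂) ℝ) (c₂ : Fin n → ℝ)
    (A₂ : Matrix (Fin q₂) (Fin s₂) ℝ) (b₂ : Fin q₂ → ℝ)
    (Γ : Matrix (Fin s₂) (Fin s₁) ℝ) (L : Fin s₂ → ℝ) (P : Matrix (Fin q₂) (Fin q₁) ℝ)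
    (hc : c₂ - c₁ = G₂.mulVec L)
    (hG : G₁ = G₂ * Γ)
    (hA : P * A₁ = A₂ * Γ)
    (hb : P.mulVec b₁ = b₂ + A₂.mulVec L)
    (hrow : ∀ j, (∑ k, |Γ j k|) + |L j| ≤ 1) :
    ∀ ζ₁ : Fin s₁ → ℝ, (∀ i, |ζ₁ i| ≤ 1) → A₁.mulVec ζ₁ = b₁ →
      (∀ j, |(Γ.mulVec ζ₁ - L) j| ≤ 1) ∧
      A₂.mulVec (Γ.mulVec ζ₁ - L) = b₂ ∧
      G₁.mulVec ζ₁ + c₁ = G₂.mulVec (Γ.mulVec ζ₁ - L) + c₂ := by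
  intro z1 hz hAz
  refine ⟨?_, ?_, ?_⟩
  · intro j
    have h1 : |(Γ.mulVec z1 - L) j| ≤ |(Γ.mulVec z1) j| + |L j| := by
      simpa using abs_sub (Γ.mulVec z1 j) (L j)
    have h2 : |(Γ.mulVec z1) j| ≤ ∑ k, |Γ j k| := by
      calc |(Γ.mulVec z1) j| = |∑ k, Γ j k * z1 k| := by
            simp [Matrix.mulVec, dotProduct]
        _ ≤ ∑ k, |Γ j k * z1 k| := Finset.abs_sum_le_sum_abs _ _
        _ ≤ ∑ k, |Γ j k| := by
            refine Finset.sum_le_sum fun k _ => ?_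
            rw [abs_mul]
            exact mul_le_of_le_one_right (abs_nonneg _) (hz k)
    linarith [hrow j]
  · have h1 : A₂.mulVec (Γ.mulVec z1 - L) = A₂.mulVec (Γ.mulVec z1) - A₂.mulVec L := by
      simp [Matrix.mulVec_sub]
    have h2 : A₂.mulVec (Γ.mulVec z1) = P.mulVec b₁ := by
      rw [← hAz, Matrix.mulVec_mulVec, ← hA, ← Matrix.mulVec_mulVec]
    rw [h1, h2, hb]
    abel
  · have h1 : G₂.mulVec (Γ.mulVec z1 - L) = G₁.mulVec z1 - G₂.mulVec L := by
      rw [Matrix.mulVec_sub, Matrix.mulVec_mulVec, ← hG]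
    rw [h1, ← hc]
    abel
end
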